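/- Let r and s be coprime nonzero integers with r²+4s ≠ 0, let α, β be the roots of λ² − rλ − s = 0 labeled so that |α| ≥ |β|, assume α/β is not a root of unity, and set x = β/α. Let V_n be the companion Lucas sequence of parameters (r,s). Let p > 2 be an odd prime, let h > 0 and t ≥ 0 be integers, set n₀ = p^h, and assume n₀ > 4 and that n₀·p^t divides n, where n ≥ 1. Then M_{n₀}(V_n) ≥ n(1 − 1/p^{t+1})·log|α| + log|1 + xⁿ| − log|1 + x^{n/p^{t+1}}| − (t+1)·log p. -/

import Mathlib

open scoped BigOperators

/-- `Mlog n₀ ℓ` is the logarithm of the largest divisor of `|ℓ|` composed only of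
primes congruent to `±1` modulo `n₀`. -/
noncomputable def Mlog (n₀ : ℕ) (ℓ : ℤ) : ℝ :=
  ∑ p ∈ ℓ.natAbs.primeFactors,
    if (n₀ : ℤ) ∣ ((p : ℤ) - 1) ∨ (n₀ : ℤ) ∣ ((p : ℤ) + 1) then
      (ℓ.natAbs.factorization p : ℝ) * Real.log p
    else 0

set_option maxHeartbeats 1000000 in


lemma binet {R : Type*} [CommRing R] (r s : ℤ) (V : ℕ → ℤ)
    (hV0 : V 0 = 2) (hV1 : V 1 = r)
    (hVrec : ∀ j : ℕ, V (j + 2) = r * V (j + 1) + s * V j)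
    (a b : R) (hab : a + b = (r : R)) (hab2 : a * b = -(s : R)) :
    ∀ k, ((V k : R)) = a ^ k + b ^ k := by
  intro k
  induction k using Nat.strong_induction_on with
  | _ k ih =>
    match k with
    | 0 => norm_num [hV0]
    | 1 => simp [hV1, ← hab]
    | (j+2) =>
      have h1 := ih (j+1) (by omega)
      have h0 := ih j (by omega)
      push_cast [hVrec j]
      rw [h1, h0, ← hab]
      have hs : (s : R) = -(a*b) := by rw [hab2]; ring
      rw [hs]; ring

-- composed recurrence
lemma comp_rec (r s : ℤ) (V : ℕ → ℤ)
    (hV0 : V 0 = 2) (hV1 : V 1 = r)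
    (hVrec : ∀ j : ℕ, V (j + 2) = r * V (j + 1) + s * V j)
    (α β : ℂ) (hsum : α + β = (r : ℂ)) (hprodroots : α * β = -(s : ℂ)) :
    ∀ m k : ℕ, V (m * (k + 2)) = V m * V (m * (k + 1)) + (-(-s)^m) * V (m * k) := by
  intro m k
  have hb := binet r s V hV0 hV1 hVrec α β hsum hprodroots
  have : ((V (m * (k + 2)) : ℂ)) = ((V m * V (m * (k + 1)) + (-(-s)^m) * V (m * k) : ℤ) : ℂ) := by
    push_cast
    rw [hb, hb, hb, hb]
    have hab : (α * β) ^ m = (-(s:ℂ))^m := by rw [hprodroots]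
    rw [← hab, pow_mul, pow_mul, pow_mul]
    ring
  exact_mod_cast this

lemma key_pair (r s : ℤ) (V : ℕ → ℤ)
    (hV0 : V 0 = 2) (hV1 : V 1 = r)
    (hVrec : ∀ j : ℕ, V (j + 2) = r * V (j + 1) + s * V j)
    (α β : ℂ) (hsum : α + β = (r : ℂ)) (hprodroots : α * β = -(s : ℂ)) (m : ℕ) :
    ∀ j : ℕ, (∃ d a : ℤ, V (m * (2*j)) = 2 * (-(-s)^m)^j + d * (V m)^2 + a * (V m)^3)
      ∧ (∃ b : ℤ, V (m * (2*j+1)) = (2*(j:ℤ)+1) * (-(-s)^m)^j * V m + b * (V m)^3) := by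
  set P := V m with hP
  set S := -(-s)^m with hS
  have hrec := comp_rec r s V hV0 hV1 hVrec α β hsum hprodroots m
  intro j
  induction j with
  | zero =>
    constructor
    · refine ⟨0, 0, ?_⟩
      simp [hV0]
    · refine ⟨0, ?_⟩
      simp [hP]
  | succ j ih =>
    obtain ⟨⟨d, a, hda⟩, ⟨b, hb⟩⟩ := ih
    have h2 : V (m * (2*j+2)) = P * V (m * (2*j+1)) + S * V (m * (2*j)) := hrec (2*j)
    have h3 : V (m * (2*j+3)) = P * V (m * (2*j+2)) + S * V (m * (2*j+1)) := by
      have := hrec (2*j+1)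
      convert this using 3 <;> ring
    constructor
    · refine ⟨(2*(j:ℤ)+1) * S^j + S*d, b*P + S*a, ?_⟩
      rw [show m*(2*(j+1)) = m*(2*j+2) from by ring, h2, hda, hb]
      push_cast
      ring
    · refine ⟨((2*(j:ℤ)+1) * S^j + S*d) + (b*P + S*a)*P + S*b, ?_⟩
      rw [show m*(2*(j+1)+1) = m*(2*j+3) from by ring, h3, h2, hda, hb]
      push_cast
      ring

lemma key_cong (r s : ℤ) (V : ℕ → ℤ)
    (hV0 : V 0 = 2) (hV1 : V 1 = r)
    (hVrec : ∀ j : ℕ, V (j + 2) = r * V (j + 1) + s * V j)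
    (α β : ℂ) (hsum : α + β = (r : ℂ)) (hprodroots : α * β = -(s : ℂ))
    (m c : ℕ) (hc : Odd c) :
    ∃ b : ℤ, V (m * c) = (c : ℤ) * (-(-s)^m)^((c-1)/2) * V m + b * (V m)^3 := by
  obtain ⟨j, hj⟩ := hc
  obtain ⟨_, ⟨b, hb⟩⟩ := key_pair r s V hV0 hV1 hVrec α β hsum hprodroots m j
  refine ⟨b, ?_⟩
  have h1 : c = 2*j+1 := by omega
  have h2 : (c-1)/2 = j := by omega
  rw [h1, show (2*j+1-1)/2 = j from by omega, hb]
  push_cast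
  ring

/-- if q ∣ s then q never divides V k for k ≥ 1 -/
lemma s_case (r s : ℤ) (hco : IsCoprime r s) (V : ℕ → ℤ)
    (hV1 : V 1 = r)
    (hVrec : ∀ j : ℕ, V (j + 2) = r * V (j + 1) + s * V j)
    (q : ℕ) (hq : q.Prime) (hqs : (q:ℤ) ∣ s) (k : ℕ) (hk : 1 ≤ k) :
    ¬ (q:ℤ) ∣ V k := by
  haveI : Fact q.Prime := ⟨hq⟩
  have hsz : ((s : ZMod q)) = 0 := by
    have : ((q:ℤ) : ZMod q) = 0 := by simp
    exact_mod_cast (ZMod.intCast_zmod_eq_zero_iff_dvd s q).2 hqs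
  have hV : ∀ j : ℕ, ((V (j+1) : ZMod q)) = (r : ZMod q)^(j+1) := by
    intro j
    induction j using Nat.strong_induction_on with
    | _ j ih =>
      match j with
      | 0 => simp [hV1]
      | (i+1) =>
        have hstep : V (i + 1 + 1) = r * V (i + 1) + s * V i := hVrec i
        rw [hstep]
        push_cast
        rw [ih i (by omega), hsz]
        ring
  intro hdvd
  have h0 : ((V k : ZMod q)) = 0 := by
    exact_mod_cast (ZMod.intCast_zmod_eq_zero_iff_dvd (V k) q).2 hdvd
  obtain ⟨i, hi⟩ : ∃ i, k = i + 1 := ⟨k - 1, by omega⟩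
  rw [hi, hV i] at h0
  have hr0 : ((r : ZMod q)) = 0 := pow_eq_zero_iff (by omega) |>.1 h0
  have hqr : (q:ℤ) ∣ r := by
    exact_mod_cast (ZMod.intCast_zmod_eq_zero_iff_dvd r q).1 (by exact_mod_cast hr0)
  obtain ⟨u, v, huv⟩ := hco
  have : (q:ℤ) ∣ 1 := huv ▸ Dvd.dvd.add (hqr.mul_left u) (hqs.mul_left v)
  have h1 := Int.le_of_dvd one_pos this
  have h2 := hq.two_le
  omega
lemma keyField {K : Type*} [Field K] (q : ℕ) [hF : Fact q.Prime] [hC : CharP K q]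
    (r s : ℤ) (hqs : ¬ (q:ℤ) ∣ s) (a : K) (ha : a * a = (r:K) * a + (s:K))
    (V : ℕ → ℤ) (hV0 : V 0 = 2) (hV1 : V 1 = r)
    (hVrec : ∀ j : ℕ, V (j + 2) = r * V (j + 1) + s * V j)
    (n m : ℕ) (hmn : m ∣ n)
    (hn : ((V n : ℤ) : K) = 0) (hm : ((V m : ℤ) : K) ≠ 0) :
    ∃ ρ : ℕ, 0 < ρ ∧ (ρ ∣ q - 1 ∨ ρ ∣ q + 1) ∧ ρ ∣ 2*n ∧ ¬ ρ ∣ 2*m := by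
  have hq2 := hF.out.two_le
  set b : K := (r:K) - a with hbdef
  have hsum : a + b = (r:K) := by rw [hbdef]; ring
  have hab2 : a * b = -(s:K) := by rw [hbdef]; linear_combination -ha
  have hsK : (s:K) ≠ 0 := fun h0 => hqs ((CharP.intCast_eq_zero_iff K q s).1 h0)
  have ha0 : a ≠ 0 := by
    intro h0; rw [h0, zero_mul] at hab2; exact hsK (neg_eq_zero.1 hab2.symm)
  have hb0 : b ≠ 0 := by
    intro h0; rw [h0, mul_zero] at hab2; exact hsK (neg_eq_zero.1 hab2.symm)
  have hbin := binet r s V hV0 hV1 hVrec a b hsum hab2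
  -- Frobenius
  have hfrob : a ^ q = a ∨ a ^ q = b := by
    have hhom : (a * a) ^ q = ((r:K) * a + (s:K)) ^ q := by rw [ha]
    have hmap : (a^q) * (a^q) = (r:K) * (a^q) + (s:K) := by
      have h1 : ((r:K) * a + (s:K)) ^ q = (r:K)^q * a^q + (s:K)^q := by
        rw [add_pow_char, mul_pow]
      have hr : (r:K)^q = (r:K) := by
        rw [← frobenius_def]; exact map_intCast _ r
      have hsq : (s:K)^q = (s:K) := by
        rw [← frobenius_def]; exact map_intCast _ s
      calc (a^q) * (a^q) = (a*a)^q := by rw [mul_pow]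
        _ = (r:K)^q * a^q + (s:K)^q := by rw [ha, h1]
        _ = (r:K) * (a^q) + (s:K) := by rw [hr, hsq]
    -- a^q is a root, roots are a and b
    have : (a^q - a) * (a^q - b) = 0 := by
      have hb2 : a * b = -(s:K) := hab2
      calc (a^q - a) * (a^q - b) = (a^q)*(a^q) - (a+b)*(a^q) + a*b := by ring
        _ = ((r:K) * (a^q) + (s:K)) - (r:K)*(a^q) + (-(s:K)) := by rw [hmap, hsum, hb2]
        _ = 0 := by ring
    rcases mul_eq_zero.1 this with h | h
    · left; exact sub_eq_zero.1 h
    · right; exact sub_eq_zero.1 h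
  set g : K := a * b⁻¹ with hgdef
  have hg0 : g ≠ 0 := mul_ne_zero ha0 (inv_ne_zero hb0)
  have hgpow : ∀ k : ℕ, g ^ k = a^k * (b^k)⁻¹ := by
    intro k; rw [hgdef, mul_pow, inv_pow]
  -- order facts
  have hdvd1 : g ^ (q-1) = 1 ∨ g ^ (q+1) = 1 := by
    rcases hfrob with h | h
    · left
      have hbq : b ^ q = b := by
        rw [hbdef, sub_pow_char]
        have hr : (r:K)^q = (r:K) := by
          rw [← frobenius_def]; exact map_intCast _ r
        rw [hr, h]
      have hgg : g ^ q = g := by rw [hgpow, h, hbq, hgdef]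
      have : g ^ (q-1) * g = 1 * g := by
        rw [← pow_succ]
        rw [show q - 1 + 1 = q from by omega, hgg, one_mul]
      exact mul_right_cancel₀ hg0 this
    · right
      have hbq : b ^ q = a := by
        rw [hbdef, sub_pow_char]
        have hr : (r:K)^q = (r:K) := by
          rw [← frobenius_def]; exact map_intCast _ r
        rw [hr, h, hbdef]; ring
      have hgg : g ^ q = g⁻¹ := by
        rw [hgpow, h, hbq, hgdef, mul_inv, inv_inv, mul_comm]
      have : g ^ (q+1) = 1 := by
        rw [pow_succ, hgg, inv_mul_cancel₀ hg0]
      exact this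
  have hgn : g ^ n = -1 := by
    have h0 : a ^ n + b ^ n = 0 := by rw [← hbin]; exact hn
    have : a ^ n = -(b ^ n) := eq_neg_of_add_eq_zero_left h0
    rw [hgpow, this]
    field_simp
  have hgm : g ^ m ≠ -1 := by
    intro hgm1
    apply hm
    rw [hbin]
    rw [hgpow] at hgm1
    have hbm : (b:K)^m ≠ 0 := pow_ne_zero _ hb0
    field_simp at hgm1
    rw [hgm1]; ring
  set ρ := orderOf g with hρ
  have hfin : IsOfFinOrder g := by
    rcases hdvd1 with h | h
    · exact isOfFinOrder_iff_pow_eq_one.2 ⟨q-1, by omega, h⟩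
    · exact isOfFinOrder_iff_pow_eq_one.2 ⟨q+1, by omega, h⟩
  have hρpos : 0 < ρ := hfin.orderOf_pos
  have hρdvd : ρ ∣ q - 1 ∨ ρ ∣ q + 1 := by
    rcases hdvd1 with h | h
    · exact Or.inl (orderOf_dvd_of_pow_eq_one h)
    · exact Or.inr (orderOf_dvd_of_pow_eq_one h)
  have hρ2n : ρ ∣ 2*n := by
    apply orderOf_dvd_of_pow_eq_one
    rw [mul_comm, pow_mul, hgn]; ring
  refine ⟨ρ, hρpos, hρdvd, hρ2n, ?_⟩
  intro hρ2m
  have h2m : g ^ (2*m) = 1 := orderOf_dvd_iff_pow_eq_one.1 hρ2m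
  by_cases hq2' : q = 2
  · -- char 2 : ρ is odd since it divides q-1=1 or q+1=3
    have hρodd : ¬ 2 ∣ ρ := by
      subst hq2'
      intro h2ρ
      rcases hρdvd with h | h
      · have : (2:ℕ) ∣ 1 := h2ρ.trans h
        norm_num at this
      · have : (2:ℕ) ∣ 3 := h2ρ.trans h
        norm_num at this
    have hρm : ρ ∣ m := (Nat.Coprime.dvd_of_dvd_mul_left
      (Nat.coprime_comm.1 (Nat.Prime.coprime_iff_not_dvd Nat.prime_two |>.2 hρodd)) hρ2m)
    have hgm1 : g ^ m = 1 := orderOf_dvd_iff_pow_eq_one.1 hρm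
    apply hgm
    rw [hgm1]
    have hchar2 : (1:K) + 1 = 0 := by
      have hc := CharP.cast_eq_zero K q
      rw [hq2'] at hc
      push_cast at hc
      linear_combination hc
    linear_combination hchar2
  · -- odd char: -1 ≠ 1
    have hne : (-1 : K) ≠ 1 := by
      have h2q : Fact (2 < q) := ⟨by omega⟩
      exact CharP.neg_one_ne_one K q
    have hsq : (g^m - 1) * (g^m + 1) = 0 := by
      have : (g^m)^2 = 1 := by rw [← pow_mul, mul_comm]; exact h2m
      linear_combination this
    rcases mul_eq_zero.1 hsq with h | h
    · -- g^m = 1 so ρ ∣ m ∣ n so g^n = 1 contradiction with g^n = -1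
      have hgm1 : g ^ m = 1 := sub_eq_zero.1 h
      have hρm : ρ ∣ m := orderOf_dvd_iff_pow_eq_one.2 hgm1
      have hρn : ρ ∣ n := hρm.trans hmn
      have : g ^ n = 1 := orderOf_dvd_iff_pow_eq_one.1 hρn
      rw [hgn] at this
      exact hne this
    · exact hgm (eq_neg_of_add_eq_zero_left h)
lemma exists_rho (r s : ℤ) (V : ℕ → ℤ)
    (hV0 : V 0 = 2) (hV1 : V 1 = r)
    (hVrec : ∀ j : ℕ, V (j + 2) = r * V (j + 1) + s * V j)
    (q : ℕ) (hq : q.Prime) (hqs : ¬ (q:ℤ) ∣ s)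
    (n m : ℕ) (hmn : m ∣ n)
    (hqVn : (q:ℤ) ∣ V n) (hqVm : ¬ (q:ℤ) ∣ V m) :
    ∃ ρ : ℕ, 0 < ρ ∧ (ρ ∣ q - 1 ∨ ρ ∣ q + 1) ∧ ρ ∣ 2*n ∧ ¬ ρ ∣ 2*m := by
  haveI : Fact q.Prime := ⟨hq⟩
  by_cases hroot : ∃ a : ZMod q, a * a = ((r:ℤ) : ZMod q) * a + ((s:ℤ) : ZMod q)
  · obtain ⟨a, ha⟩ := hroot
    refine keyField q r s hqs a ha V hV0 hV1 hVrec n m hmn ?_ ?_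
    · exact (ZMod.intCast_zmod_eq_zero_iff_dvd (V n) q).2 hqVn
    · intro h0
      exact hqVm ((ZMod.intCast_zmod_eq_zero_iff_dvd (V m) q).1 h0)
  · -- irreducible quadratic
    set f : Polynomial (ZMod q) :=
      Polynomial.X^2 + Polynomial.C (-(r : ZMod q)) * Polynomial.X
        + Polynomial.C (-(s : ZMod q)) with hf
    have hfC : f = Polynomial.C 1 * Polynomial.X^2 + Polynomial.C (-(r : ZMod q)) * Polynomial.X
        + Polynomial.C (-(s : ZMod q)) := by rw [hf, Polynomial.C_1]; ring
    have hdeg : f.natDegree = 2 := by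
      rw [hfC]; exact Polynomial.natDegree_quadratic (by norm_num : (1 : ZMod q) ≠ 0)
    have hfmonic : f.Monic := by
      rw [hf, add_assoc]
      apply Polynomial.monic_X_pow_add
      apply lt_of_le_of_lt (Polynomial.degree_add_le _ _)
      apply max_lt
      · apply lt_of_le_of_lt (Polynomial.degree_mul_le _ _)
        apply lt_of_le_of_lt (add_le_add Polynomial.degree_C_le Polynomial.degree_X_le)
        decide
      · apply lt_of_le_of_lt Polynomial.degree_C_le
        decide
    have heval : ∀ c : ZMod q, Polynomial.eval c f = c*c - (r:ZMod q)*c - (s:ZMod q) := by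
      intro c; rw [hf]; simp; ring
    have hirr : Irreducible f := by
      rw [hfmonic.irreducible_iff_roots_eq_zero_of_degree_le_three (by omega) (by omega)]
      rw [Multiset.eq_zero_iff_forall_notMem]
      intro c hc
      have hcr := Polynomial.isRoot_of_mem_roots hc
      rw [Polynomial.IsRoot, heval c] at hcr
      exact hroot ⟨c, by linear_combination hcr⟩
    haveI : Fact (Irreducible f) := ⟨hirr⟩
    haveI : CharP (AdjoinRoot f) q :=
      charP_of_injective_algebraMap (algebraMap (ZMod q) (AdjoinRoot f)).injective q
    have ha : (AdjoinRoot.root f) * (AdjoinRoot.root f)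
        = (r : AdjoinRoot f) * (AdjoinRoot.root f) + (s : AdjoinRoot f) := by
      have h0 : Polynomial.eval₂ (AdjoinRoot.of f) (AdjoinRoot.root f)
          (Polynomial.X^2 + Polynomial.C (-(r : ZMod q)) * Polynomial.X
            + Polynomial.C (-(s : ZMod q))) = 0 := by
        rw [← hf]; exact AdjoinRoot.eval₂_root f
      simp only [Polynomial.eval₂_add, Polynomial.eval₂_mul, Polynomial.eval₂_C,
        Polynomial.eval₂_X, Polynomial.eval₂_X_pow, Polynomial.eval₂_neg,
        map_one, map_neg] at h0
      have hrc : (AdjoinRoot.of f) ((r : ZMod q)) = (r : AdjoinRoot f) := by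
        rw [show ((r : ZMod q)) = ((r : ℤ) : ZMod q) from rfl, map_intCast]
      have hsc : (AdjoinRoot.of f) ((s : ZMod q)) = (s : AdjoinRoot f) := by
        rw [show ((s : ZMod q)) = ((s : ℤ) : ZMod q) from rfl, map_intCast]
      rw [hrc, hsc] at h0
      linear_combination h0
    refine keyField q r s hqs (AdjoinRoot.root f) ha V hV0 hV1 hVrec n m hmn ?_ ?_
    · exact (CharP.intCast_eq_zero_iff (AdjoinRoot f) q (V n)).2 hqVn
    · intro h0
      exact hqVm ((CharP.intCast_eq_zero_iff (AdjoinRoot f) q (V m)).1 h0)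


lemma rho_pow (p : ℕ) (hp : p.Prime) (ρ n m t h : ℕ)
    (hρpos : 0 < ρ) (hρ2n : ρ ∣ 2*n) (hρ2m : ¬ ρ ∣ 2*m) (hnm : n = m * p^(t+1))
    (hmh : p^(h-1) ∣ m) (hh : 1 ≤ h) : p^h ∣ ρ := by
  by_contra hcon
  set e := ρ.factorization p with he
  have hρ0 : ρ ≠ 0 := hρpos.ne'
  have hele : e ≤ h - 1 := by
    have := (Nat.Prime.pow_dvd_iff_le_factorization hp hρ0).not.1 hcon
    omega
  have hpem : p ^ e ∣ m := dvd_trans (pow_dvd_pow p hele) hmh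
  set u := ρ / p ^ e with hu
  have hρeq : p ^ e * u = ρ := Nat.ordProj_mul_ordCompl_eq_self ρ p
  have hpu : ¬ p ∣ u := Nat.not_dvd_ordCompl hp hρ0
  have hcop : Nat.Coprime p u := (Nat.Prime.coprime_iff_not_dvd hp).2 hpu
  have hu2m : u ∣ 2*m := by
    have h1 : u ∣ (2*m) * p^(t+1) := by
      have : u ∣ ρ := Dvd.intro_left _ hρeq
      apply this.trans
      apply hρ2n.trans
      rw [hnm, show 2*(m*p^(t+1)) = (2*m)*p^(t+1) from by ring]
    exact Nat.Coprime.dvd_of_dvd_mul_right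
      (Nat.Coprime.pow_right (t+1) hcop.symm) h1
  apply hρ2m
  rw [← hρeq]
  exact Nat.Coprime.mul_dvd_of_dvd_of_dvd (Nat.Coprime.pow_left e hcop)
    (hpem.trans (dvd_mul_left m 2)) hu2m
lemma goodProd_mul_badProd (n₀ : ℕ) (a : ℕ) (ha : a ≠ 0) :
    (∏ q ∈ a.primeFactors,
      if (n₀ : ℤ) ∣ ((q : ℤ) - 1) ∨ (n₀ : ℤ) ∣ ((q : ℤ) + 1) then q ^ a.factorization q else 1)
    * (∏ q ∈ a.primeFactors,
      if (n₀ : ℤ) ∣ ((q : ℤ) - 1) ∨ (n₀ : ℤ) ∣ ((q : ℤ) + 1) then 1 else q ^ a.factorization q)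
    = a := by
  rw [← Finset.prod_mul_distrib]
  have : ∀ q ∈ a.primeFactors,
      ((if (n₀ : ℤ) ∣ ((q : ℤ) - 1) ∨ (n₀ : ℤ) ∣ ((q : ℤ) + 1) then q ^ a.factorization q else 1)
      * (if (n₀ : ℤ) ∣ ((q : ℤ) - 1) ∨ (n₀ : ℤ) ∣ ((q : ℤ) + 1) then 1 else q ^ a.factorization q))
      = q ^ a.factorization q := by
    intro q _
    split_ifs <;> ring
  rw [Finset.prod_congr rfl this]
  rw [← Nat.support_factorization]
  exact Nat.factorization_prod_pow_eq_self ha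

lemma Mlog_eq_log (n₀ : ℕ) (A : ℤ) :
    Mlog n₀ A = Real.log ((∏ q ∈ A.natAbs.primeFactors,
      if (n₀ : ℤ) ∣ ((q : ℤ) - 1) ∨ (n₀ : ℤ) ∣ ((q : ℤ) + 1)
        then q ^ A.natAbs.factorization q else 1 : ℕ) : ℝ) := by
  rw [Mlog, Nat.cast_prod, Real.log_prod]
  · apply Finset.sum_congr rfl
    intro q hq
    have hq1 : 1 < q := (Nat.prime_of_mem_primeFactors hq).one_lt
    split_ifs with hgood
    · push_cast
      rw [Real.log_pow]
    · simp
  · intro q hq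
    have hq1 : 1 < q := (Nat.prime_of_mem_primeFactors hq).one_lt
    split_ifs with hgood
    · push_cast
      positivity
    · norm_num

lemma Mlog_main (n₀ : ℕ) (A B w : ℤ) (p t : ℕ) (hp : p.Prime) (hA : A = w * B)
    (hA0 : A ≠ 0) (hB0 : B ≠ 0)
    (hbad : ∀ q : ℕ, q.Prime → ¬((n₀:ℤ) ∣ (q:ℤ)-1 ∨ (n₀:ℤ) ∣ (q:ℤ)+1) → q ≠ p → ¬ (q:ℤ) ∣ w)
    (hbadp : ¬ (p:ℤ)^(t+2) ∣ w) :
    Mlog n₀ A ≥ Real.log (|(A:ℝ)|) - Real.log (|(B:ℝ)|) - ((t:ℝ)+1) * Real.log p := by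
  classical
  set good : ℕ → Prop := fun q => (n₀:ℤ) ∣ (q:ℤ)-1 ∨ (n₀:ℤ) ∣ (q:ℤ)+1 with hgood
  have hw0 : w ≠ 0 := fun hzz => hA0 (by rw [hA, hzz, zero_mul])
  set a := A.natAbs with hadef
  set b := B.natAbs with hbdef
  set wn := w.natAbs with hwdef
  have ha0 : a ≠ 0 := Int.natAbs_ne_zero.2 hA0
  have hb0 : b ≠ 0 := Int.natAbs_ne_zero.2 hB0
  have hw0' : wn ≠ 0 := Int.natAbs_ne_zero.2 hw0
  have hab : a = wn * b := by rw [hadef, hA, Int.natAbs_mul]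
  set gA := (∏ q ∈ a.primeFactors,
      if good q then q ^ a.factorization q else 1) with hgA
  set gW := (∏ q ∈ wn.primeFactors,
      if good q then q ^ wn.factorization q else 1) with hgW
  set bW := (∏ q ∈ wn.primeFactors,
      if good q then 1 else q ^ wn.factorization q) with hbW
  have hgWbW : gW * bW = wn := goodProd_mul_badProd n₀ wn hw0'
  have hgApos : 0 < gA := by
    apply Finset.prod_pos
    intro q hq
    have := (Nat.prime_of_mem_primeFactors hq).pos
    split_ifs <;> positivity
  have hgWpos : 0 < gW := by
    apply Finset.prod_pos
    intro q hq
    have := (Nat.prime_of_mem_primeFactors hq).pos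
    split_ifs <;> positivity
  have hbWpos : 0 < bW := by
    apply Finset.prod_pos
    intro q hq
    have := (Nat.prime_of_mem_primeFactors hq).pos
    split_ifs <;> positivity
  -- gW ∣ gA
  have hdvd1 : gW ∣ gA := by
    have hsub : wn.primeFactors ⊆ a.primeFactors := by
      rw [hab]; exact Nat.primeFactors_mono (dvd_mul_right wn b) (by rw [← hab]; exact ha0)
    calc gW ∣ (∏ q ∈ wn.primeFactors, if good q then q ^ a.factorization q else 1) := by
          apply Finset.prod_dvd_prod_of_dvd
          intro q hq
          split_ifs
          · apply pow_dvd_pow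
            have : wn ∣ a := by rw [hab]; exact dvd_mul_right wn b
            exact (Nat.factorization_le_iff_dvd hw0' ha0).2 this q
          · exact dvd_rfl
      _ ∣ gA := Finset.prod_dvd_prod_of_subset _ _ _ hsub
  -- bW ∣ p ^ (t+1)
  have hdvd2 : bW ∣ p ^ (t+1) := by
    have hfilter : bW = ∏ q ∈ wn.primeFactors.filter (fun q => ¬ good q),
        q ^ wn.factorization q := by
      rw [hbW, Finset.prod_filter]
      apply Finset.prod_congr rfl
      intro q _
      split_ifs <;> rfl
    have hsub : wn.primeFactors.filter (fun q => ¬ good q) ⊆ {p} := by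
      intro q hq
      rw [Finset.mem_filter] at hq
      obtain ⟨hqpf, hqbad⟩ := hq
      have hqprime := Nat.prime_of_mem_primeFactors hqpf
      have hqdvd : (q:ℤ) ∣ w := by
        have h1 := Nat.dvd_of_mem_primeFactors hqpf
        exact Int.dvd_natAbs.1 (Int.ofNat_dvd.2 h1)
      rw [Finset.mem_singleton]
      by_contra hqp
      exact hbad q hqprime hqbad hqp hqdvd
    rcases Finset.subset_singleton_iff.1 hsub with h | h
    · rw [hfilter, h]; simp
    · rw [hfilter, h, Finset.prod_singleton]
      apply pow_dvd_pow
      by_contra hgt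
      push_neg at hgt
      apply hbadp
      have h2 : (p:ℤ)^(t+2) ∣ (wn : ℤ) := by
        have h1 : p^(t+2) ∣ wn := by
          apply (Nat.Prime.pow_dvd_iff_le_factorization hp hw0').2
          omega
        exact_mod_cast h1
      exact Int.dvd_natAbs.1 h2
  -- real analysis
  have hM : Mlog n₀ A = Real.log (gA:ℝ) := Mlog_eq_log n₀ A
  have hgWr : (0:ℝ) < gW := by exact_mod_cast hgWpos
  have hbWr : (0:ℝ) < bW := by exact_mod_cast hbWpos
  have h1 : Real.log (gW:ℝ) ≤ Real.log (gA:ℝ) := by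
    apply Real.log_le_log hgWr
    exact_mod_cast Nat.le_of_dvd hgApos hdvd1
  have h2 : Real.log (wn:ℝ) = Real.log (gW:ℝ) + Real.log (bW:ℝ) := by
    rw [← Real.log_mul (ne_of_gt hgWr) (ne_of_gt hbWr)]
    congr 1
    exact_mod_cast hgWbW.symm
  have h3 : Real.log (bW:ℝ) ≤ ((t:ℝ)+1) * Real.log p := by
    have hle : (bW:ℝ) ≤ ((p:ℝ))^(t+1) := by
      exact_mod_cast Nat.le_of_dvd (pow_pos hp.pos _) hdvd2
    calc Real.log (bW:ℝ) ≤ Real.log ((p:ℝ)^(t+1)) := Real.log_le_log hbWr hle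
      _ = ((t:ℝ)+1) * Real.log p := by rw [Real.log_pow]; push_cast; ring
  have h4 : Real.log |(A:ℝ)| = Real.log (a:ℝ) := by
    congr 1
    rw [hadef, Nat.cast_natAbs]
    push_cast
    ring
  have h5 : Real.log |(B:ℝ)| = Real.log (b:ℝ) := by
    congr 1
    rw [hbdef, Nat.cast_natAbs]
    push_cast
    ring
  have h6 : Real.log (a:ℝ) = Real.log (wn:ℝ) + Real.log (b:ℝ) := by
    rw [← Real.log_mul (by exact_mod_cast hw0') (by exact_mod_cast hb0)]
    congr 1
    exact_mod_cast hab
  rw [ge_iff_le, hM, h4, h5]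
  linarith
lemma pLTE (r s : ℤ) (V : ℕ → ℤ)
    (hV0 : V 0 = 2) (hV1 : V 1 = r)
    (hVrec : ∀ j : ℕ, V (j + 2) = r * V (j + 1) + s * V j)
    (α β : ℂ) (hsum : α + β = (r : ℂ)) (hprodroots : α * β = -(s : ℂ))
    (p : ℕ) (hp : p.Prime) (hpodd : 2 < p)
    (m : ℕ) (hpVm : (p:ℤ) ∣ V m) (hps : ¬ (p:ℤ) ∣ s) :
    ∀ j, ∃ w : ℤ, V (m * p^j) = w * V m ∧ ¬ (p:ℤ)^(j+1) ∣ w := by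
  have hpZ : Prime (p:ℤ) := Nat.prime_iff_prime_int.mp hp
  intro j
  induction j with
  | zero =>
    refine ⟨1, by rw [pow_zero, mul_one, one_mul], ?_⟩
    rw [pow_one]
    intro hd
    have := Int.le_of_dvd one_pos hd
    omega
  | succ j ih =>
    obtain ⟨w, hw, hwnd⟩ := ih
    set M := m * p^j with hM
    obtain ⟨b, hb⟩ := key_cong r s V hV0 hV1 hVrec α β hsum hprodroots M p
      (hp.odd_of_ne_two (by omega))
    set S := -(-s)^M with hS
    set u := S^((p-1)/2) with hu
    have hpu : ¬ (p:ℤ) ∣ u := by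
      intro hdu
      have h1 : (p:ℤ) ∣ S := hpZ.dvd_of_dvd_pow hdu
      have h2 : (p:ℤ) ∣ (-s)^M := (dvd_neg.1 h1)
      have h3 : (p:ℤ) ∣ -s := hpZ.dvd_of_dvd_pow h2
      exact hps (dvd_neg.1 h3)
    have hpBj : (p:ℤ) ∣ V M := by
      rw [hw]; exact Dvd.dvd.mul_left hpVm w
    obtain ⟨Bj', hBj'⟩ := hpBj
    -- V (M * p) = w_j * V M
    have hfact : V (M * p) = ((p:ℤ) * u + b * (V M)^2) * V M := by
      rw [hb, hu]; ring
    set U : ℤ := u + b * (p:ℤ) * Bj'^2 with hU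
    have hwj : (p:ℤ) * u + b * (V M)^2 = (p:ℤ) * U := by
      rw [hU, hBj']; ring
    have hpU : ¬ (p:ℤ) ∣ U := by
      intro hdU
      apply hpu
      have : (p:ℤ) ∣ b * (p:ℤ) * Bj'^2 := ⟨b * Bj'^2, by ring⟩
      have h2 : (p:ℤ) ∣ U - b * (p:ℤ) * Bj'^2 := dvd_sub hdU this
      simpa [hU] using h2
    refine ⟨(p:ℤ) * U * w, ?_, ?_⟩
    · have hidx : m * p^(j+1) = M * p := by rw [hM]; ring
      rw [hidx, hfact, hwj, hw]; ring
    · intro hdvd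
      have hstep : (p:ℤ)^(j+1+1) = (p:ℤ) * (p:ℤ)^(j+1) := by ring
      rw [hstep] at hdvd
      have hcancel : (p:ℤ)^(j+1) ∣ U * w := by
        have hpne : (p:ℤ) ≠ 0 := by exact_mod_cast hp.pos.ne'
        have : (p:ℤ) * (p:ℤ)^(j+1) ∣ (p:ℤ) * (U * w) := by
          convert hdvd using 1; ring
        exact (mul_dvd_mul_iff_left hpne).1 this
      exact hwnd (hpZ.pow_dvd_of_dvd_mul_left _ hpU hcancel)

lemma V_ne_zero (r s : ℤ) (hs : s ≠ 0) (V : ℕ → ℤ)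
    (hV0 : V 0 = 2) (hV1 : V 1 = r)
    (hVrec : ∀ j : ℕ, V (j + 2) = r * V (j + 1) + s * V j)
    (α β : ℂ) (hsum : α + β = (r : ℂ)) (hprodroots : α * β = -(s : ℂ))
    (hnru : ∀ j : ℕ, 0 < j → (α / β) ^ j ≠ 1)
    (k : ℕ) (hk : 1 ≤ k) : V k ≠ 0 := by
  have hsC : (s:ℂ) ≠ 0 := Int.cast_ne_zero.2 hs
  have hprod0 : α * β ≠ 0 := by rw [hprodroots]; simpa using hsC
  have hα : α ≠ 0 := fun h => hprod0 (by rw [h, zero_mul])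
  have hβ : β ≠ 0 := fun h => hprod0 (by rw [h, mul_zero])
  intro h0
  have hb := binet r s V hV0 hV1 hVrec α β hsum hprodroots k
  rw [h0] at hb
  have h1 : α ^ k = -(β ^ k) := by
    have : (0:ℂ) = α ^ k + β ^ k := by exact_mod_cast hb
    linear_combination -this
  have h2 : (α / β) ^ k = -1 := by
    rw [div_pow, h1]
    field_simp
  apply hnru (k * 2) (by omega)
  rw [pow_mul, h2]
  norm_num

lemma log_V (r s : ℤ) (hs : s ≠ 0) (V : ℕ → ℤ)
    (hV0 : V 0 = 2) (hV1 : V 1 = r)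
    (hVrec : ∀ j : ℕ, V (j + 2) = r * V (j + 1) + s * V j)
    (α β : ℂ) (hsum : α + β = (r : ℂ)) (hprodroots : α * β = -(s : ℂ))
    (hnru : ∀ j : ℕ, 0 < j → (α / β) ^ j ≠ 1)
    (k : ℕ) (hk : 1 ≤ k) :
    Real.log |((V k : ℤ) : ℝ)| =
      (k : ℝ) * Real.log ‖α‖ + Real.log ‖1 + (β/α) ^ k‖ := by
  have hsC : (s:ℂ) ≠ 0 := Int.cast_ne_zero.2 hs
  have hprod0 : α * β ≠ 0 := by rw [hprodroots]; simpa using hsC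
  have hα : α ≠ 0 := fun h => hprod0 (by rw [h, zero_mul])
  have hVk : ((V k : ℂ)) = α ^ k * (1 + (β/α)^k) := by
    rw [binet r s V hV0 hV1 hVrec α β hsum hprodroots k, div_pow]
    field_simp
  have habs : |((V k : ℤ) : ℝ)| = ‖α‖ ^ k * ‖1 + (β/α)^k‖ := by
    rw [← Complex.norm_intCast, hVk, norm_mul, norm_pow]
  rw [habs]
  have hVk0 : V k ≠ 0 := V_ne_zero r s hs V hV0 hV1 hVrec α β hsum hprodroots hnru k hk
  have h2 : ‖1 + (β/α)^k‖ ≠ 0 := by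
    intro h
    apply hVk0
    have : ((V k : ℂ)) = 0 := by
      rw [hVk]
      rw [norm_eq_zero] at h
      rw [h, mul_zero]
    exact_mod_cast this
  have h1 : ‖α‖ ^ k ≠ 0 := pow_ne_zero _ (fun h => hα (norm_eq_zero.1 h))
  rw [Real.log_mul h1 h2, Real.log_pow]

theorem stmt_9 (r s : ℤ) (hr : r ≠ 0) (hs : s ≠ 0) (hco : IsCoprime r s)
    (hdisc : r ^ 2 + 4 * s ≠ 0)
    (α β : ℂ) (hsum : α + β = (r : ℂ)) (hprodroots : α * β = -(s : ℂ))
    (habs : ‖β‖ ≤ ‖α‖)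
    (hnru : ∀ j : ℕ, 0 < j → (α / β) ^ j ≠ 1)
    (x : ℂ) (hx : x = β / α)
    (V : ℕ → ℤ) (hV0 : V 0 = 2) (hV1 : V 1 = r)
    (hVrec : ∀ j : ℕ, V (j + 2) = r * V (j + 1) + s * V j)
    (p : ℕ) (hp : p.Prime) (hpodd : 2 < p) (h t : ℕ) (hh : 0 < h)
    (n₀ : ℕ) (hn₀ : n₀ = p ^ h) (hn₀4 : 4 < n₀)
    (n : ℕ) (hn : 1 ≤ n) (hdvd : n₀ * p ^ t ∣ n) :
    Mlog n₀ (V n) ≥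
      (n : ℝ) * (1 - 1 / (p : ℝ) ^ (t + 1)) * Real.log ‖α‖
        + Real.log ‖1 + x ^ n‖
        - Real.log ‖1 + x ^ (n / p ^ (t + 1))‖
        - ((t : ℝ) + 1) * Real.log p := by
  subst hx
  set m := n / p ^ (t+1) with hmdef
  have hpht : p ^ (h+t) ∣ n := by
    have h1 : p^h * p^t ∣ n := by rwa [hn₀] at hdvd
    rwa [← pow_add] at h1
  have hpt1 : p ^ (t+1) ∣ n := dvd_trans (pow_dvd_pow p (by omega)) hpht
  have hnm : n = m * p ^ (t+1) := (Nat.div_mul_cancel hpt1).symm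
  have hm1 : 1 ≤ m := by
    rcases Nat.eq_zero_or_pos m with h0 | h1
    · rw [h0, zero_mul] at hnm; omega
    · exact h1
  have hmh : p ^ (h-1) ∣ m := by
    have hkey : p ^ (h-1) * p ^ (t+1) ∣ m * p ^ (t+1) := by
      rw [← pow_add, show (h-1) + (t+1) = h + t from by omega, ← hnm]
      exact hpht
    exact (Nat.mul_dvd_mul_iff_right (pow_pos hp.pos (t+1))).1 hkey
  have hmn : m ∣ n := ⟨p^(t+1), hnm⟩
  have hVm0 : V m ≠ 0 := V_ne_zero r s hs V hV0 hV1 hVrec α β hsum hprodroots hnru m hm1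
  have hVn0 : V n ≠ 0 := V_ne_zero r s hs V hV0 hV1 hVrec α β hsum hprodroots hnru n hn
  have hOddp : Odd p := hp.odd_of_ne_two (by omega)
  have hOdd : Odd (p ^ (t+1)) := hOddp.pow
  -- the quotient w
  obtain ⟨b, hb⟩ := key_cong r s V hV0 hV1 hVrec α β hsum hprodroots m (p^(t+1)) hOdd
  set c : ℤ := ((p:ℤ))^(t+1) with hc
  have hcnat : ((p^(t+1) : ℕ) : ℤ) = c := by push_cast [hc]; ring
  set e := (p^(t+1) - 1)/2 with he
  set S : ℤ := -(-s)^m with hS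
  set w : ℤ := c * S^e + b * (V m)^2 with hw
  have hVnw : V n = w * V m := by
    rw [hnm, hb, hcnat, hw]
    ring
  -- q ∣ s implications
  have hscase : ∀ q : ℕ, q.Prime → (q:ℤ) ∣ s → ∀ k, 1 ≤ k → ¬ (q:ℤ) ∣ V k :=
    fun q hq hqs k hk => s_case r s hco V hV1 hVrec q hq hqs k hk
  -- good primes
  have hgoodlemma : ∀ q : ℕ, q.Prime → ¬((n₀:ℤ) ∣ (q:ℤ)-1 ∨ (n₀:ℤ) ∣ (q:ℤ)+1) → q ≠ p →
      ¬ (q:ℤ) ∣ w := by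
    intro q hq hbad hqp hqw
    have hqZ : Prime (q:ℤ) := Nat.prime_iff_prime_int.mp hq
    have hqVn : (q:ℤ) ∣ V n := by rw [hVnw]; exact hqw.mul_right _
    by_cases hqVm : (q:ℤ) ∣ V m
    · -- q ∣ c * S^e
      have hqcs : (q:ℤ) ∣ c * S^e := by
        have h1 : (q:ℤ) ∣ b * (V m)^2 :=
          Dvd.dvd.mul_left (dvd_pow hqVm two_ne_zero) b
        have h2 : (q:ℤ) ∣ w - b * (V m)^2 := dvd_sub hqw h1
        simpa [hw, add_sub_cancel_right] using h2
      rcases hqZ.dvd_mul.1 hqcs with h1 | h1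
      · -- q ∣ p^(t+1) so q = p
        have h2 : (q:ℤ) ∣ (p:ℤ) := hqZ.dvd_of_dvd_pow (by rwa [hc] at h1)
        have h3 : q ∣ p := Int.ofNat_dvd.1 h2
        exact hqp ((Nat.prime_dvd_prime_iff_eq hq hp).1 h3)
      · -- q ∣ S^e hence q ∣ s
        have h2 : (q:ℤ) ∣ S := hqZ.dvd_of_dvd_pow h1
        have h3 : (q:ℤ) ∣ (-s)^m := dvd_neg.1 (by rwa [hS] at h2)
        have h4 : (q:ℤ) ∣ s := dvd_neg.1 (hqZ.dvd_of_dvd_pow h3)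
        exact hscase q hq h4 m hm1 hqVm
    · -- field route
      have hqs : ¬ (q:ℤ) ∣ s := by
        intro hqs
        exact hscase q hq hqs n hn hqVn
      obtain ⟨ρ, hρpos, hρdvd, hρ2n, hρ2m⟩ :=
        exists_rho r s V hV0 hV1 hVrec q hq hqs n m hmn hqVn hqVm
      have hph : p ^ h ∣ ρ := rho_pow p hp ρ n m t h hρpos hρ2n hρ2m hnm hmh hh
      apply hbad
      rcases hρdvd with h1 | h1
      · left
        have h2 : (p^h : ℕ) ∣ q - 1 := hph.trans h1
        have h3 : ((q - 1 : ℕ) : ℤ) = (q:ℤ) - 1 := by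
          push_cast [Nat.cast_sub hq.one_le]; ring
        rw [hn₀, ← h3]
        exact_mod_cast Int.ofNat_dvd.2 h2
      · right
        have h2 : (p^h : ℕ) ∣ q + 1 := hph.trans h1
        rw [hn₀, show (q:ℤ) + 1 = ((q+1:ℕ):ℤ) from by push_cast; ring]
        exact_mod_cast Int.ofNat_dvd.2 h2
  -- p-adic bound
  have hpbound : ¬ (p:ℤ)^(t+2) ∣ w := by
    by_cases hpVm : (p:ℤ) ∣ V m
    · have hps : ¬ (p:ℤ) ∣ s := by
        intro hps
        exact hscase p hp hps m hm1 hpVm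
      obtain ⟨w', hw', hw'nd⟩ := pLTE r s V hV0 hV1 hVrec α β hsum hprodroots
        p hp hpodd m hpVm hps (t+1)
      have : w = w' := by
        apply mul_right_cancel₀ hVm0
        rw [← hVnw, ← hw', hnm]
      rw [this]
      exact hw'nd
    · -- p does not divide V n
      have hpVn : ¬ (p:ℤ) ∣ V n := by
        intro hpVn
        have hps : ¬ (p:ℤ) ∣ s := by
          intro hps
          exact hscase p hp hps n hn hpVn
        obtain ⟨ρ, hρpos, hρdvd, hρ2n, hρ2m⟩ :=
          exists_rho r s V hV0 hV1 hVrec p hp hps n m hmn hpVn hpVm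
        have hph : p ^ h ∣ ρ := rho_pow p hp ρ n m t h hρpos hρ2n hρ2m hnm hmh hh
        have hpρ : p ∣ ρ := dvd_trans (dvd_pow_self p (by omega : h ≠ 0)) hph
        rcases hρdvd with h1 | h1
        · have h2 : p ∣ p - 1 := hpρ.trans h1
          have := Nat.le_of_dvd (by omega) h2
          omega
        · have h2 : p ∣ p + 1 := hpρ.trans h1
          have h3 : p ∣ 1 := by
            have h4 := Nat.dvd_sub h2 (dvd_refl p)
            simpa using h4
          have := Nat.le_of_dvd one_pos h3
          omega
      intro hcon
      apply hpVn
      rw [hVnw]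
      exact ((dvd_pow_self (p:ℤ) (by omega : t+2 ≠ 0)).trans hcon).mul_right _
  -- apply Mlog_main
  have hmain := Mlog_main n₀ (V n) (V m) w p t hp hVnw hVn0 hVm0 hgoodlemma hpbound
  have hlogn := log_V r s hs V hV0 hV1 hVrec α β hsum hprodroots hnru n hn
  have hlogm := log_V r s hs V hV0 hV1 hVrec α β hsum hprodroots hnru m hm1
  have hcoef : (n : ℝ) * (1 - 1 / (p : ℝ) ^ (t + 1)) = (n : ℝ) - (m : ℝ) := by
    have hpne : ((p:ℝ))^(t+1) ≠ 0 := pow_ne_zero _ (by exact_mod_cast hp.pos.ne')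
    have hnr : (n:ℝ) = (m:ℝ) * (p:ℝ)^(t+1) := by exact_mod_cast congrArg (Nat.cast (R := ℝ)) hnm
    field_simp
    rw [hnr]
    ring
  rw [ge_iff_le]
  calc (n : ℝ) * (1 - 1 / (p : ℝ) ^ (t + 1)) * Real.log ‖α‖
        + Real.log ‖1 + (β/α) ^ n‖
        - Real.log ‖1 + (β/α) ^ m‖
        - ((t : ℝ) + 1) * Real.log p
      = Real.log |((V n : ℤ) : ℝ)| - Real.log |((V m : ℤ) : ℝ)|
        - ((t:ℝ)+1) * Real.log p := by
        rw [hlogn, hlogm, hcoef]; ring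
    _ ≤ Mlog n₀ (V n) := hmain
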